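/- Let n be a nonnegative integer and let s be a nonnegative integer. If s is even, then the power moment of the Hermite Rakhmanov density satisfies ∫_{-∞}^{∞} x^{s} e^{-x²} [H_n(x)]² dx = 2^{2n} Σ_{k=0}^{n} C(n,k)² k! 2^{-k} Γ(1/2 − k + n + s/2) · ₂F₁(k − n, 1/2 + k − n; 1/2 + k − n − s/2; 1). If s is odd, then ∫_{-∞}^{∞} x^{s} e^{-x²} [H_n(x)]² dx = 0. -/

import Mathlib

open MeasureTheory Finset Real

/-- Pochhammer symbol `(a)_k = a (a+1) ⋯ (a+k-1)`. -/
noncomputable def poch (a : ℝ) (k : ℕ) : ℝ := ∏ i ∈ Finset.range k, (a + i)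

/-- Generalized binomial coefficient `C(a, j) = (a-j+1)_j / j!`. -/
noncomputable def gbinom (a : ℝ) (j : ℕ) : ℝ := poch (a - j + 1) j / (j.factorial : ℝ)

/-- Generalized Laguerre polynomial `L_n^{(α)}`. -/
noncomputable def Lag (α : ℝ) (n : ℕ) (x : ℝ) : ℝ :=
  ∑ i ∈ Finset.range (n + 1),
    ((-1 : ℝ) ^ i / (i.factorial : ℝ)) * gbinom ((n : ℝ) + α) (n - i) * x ^ i

/-- Physicists' Hermite polynomial `H_n`. -/
noncomputable def Herm (n : ℕ) (x : ℝ) : ℝ :=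
  ∑ k ∈ Finset.range (n / 2 + 1),
    ((-1 : ℝ) ^ k * (n.factorial : ℝ) / ((k.factorial : ℝ) * ((n - 2 * k).factorial : ℝ))) *
      (2 * x) ^ (n - 2 * k)

/-- Jacobi polynomial `P_n^{(α,γ)}`. -/
noncomputable def Jac (α γ : ℝ) (n : ℕ) (x : ℝ) : ℝ :=
  ∑ k ∈ Finset.range (n + 1),
    gbinom ((n : ℝ) + α) (n - k) * gbinom ((n : ℝ) + γ) k *
      ((x - 1) / 2) ^ k * ((x + 1) / 2) ^ (n - k)

/-- Terminating Lauricella function of type A. -/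
noncomputable def lauricellaA {r : ℕ} (a : ℝ) (m : Fin r → ℕ) (c x : Fin r → ℝ) : ℝ :=
  ∑ j ∈ Fintype.piFinset (fun i => Finset.range (m i + 1)),
    poch a (∑ i, j i) *
      ∏ i, (poch (-(m i : ℝ)) (j i) / (poch (c i) (j i) * ((j i).factorial : ℝ)) * x i ^ (j i))

/-- Terminating Gauss hypergeometric sum `₂F₁(-k, b; c; x)`. -/
noncomputable def hyp2F1 (k : ℕ) (b c x : ℝ) : ℝ :=
  ∑ j ∈ Finset.range (k + 1),
    poch (-(k : ℝ)) j * poch b j / (poch c j * (j.factorial : ℝ)) * x ^ j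

/-- Terminating hypergeometric sum `₃F₂(-k, b₁, b₂; c₁, c₂; x)`. -/
noncomputable def hyp3F2 (k : ℕ) (b₁ b₂ c₁ c₂ x : ℝ) : ℝ :=
  ∑ j ∈ Finset.range (k + 1),
    poch (-(k : ℝ)) j * poch b₁ j * poch b₂ j /
      (poch c₁ j * poch c₂ j * (j.factorial : ℝ)) * x ^ j

/-- Gauss hypergeometric series `₂F₁(a, b; c; x)` (a terminating series when `a` or `b`
is a nonpositive integer). -/
noncomputable def hypSum (a b c x : ℝ) : ℝ :=
  ∑' j : ℕ, poch a j * poch b j / (poch c j * (j.factorial : ℝ)) * x ^ j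

/-- Terminating Appell function `F₂(a; -m₁, -m₂; c₁, c₂; x₁, x₂)`. -/
noncomputable def appellF2 (a : ℝ) (m₁ m₂ : ℕ) (c₁ c₂ x₁ x₂ : ℝ) : ℝ :=
  ∑ j₁ ∈ Finset.range (m₁ + 1), ∑ j₂ ∈ Finset.range (m₂ + 1),
    poch a (j₁ + j₂) * poch (-(m₁ : ℝ)) j₁ * poch (-(m₂ : ℝ)) j₂ /
      (poch c₁ j₁ * poch c₂ j₂ * (j₁.factorial : ℝ) * (j₂.factorial : ℝ)) * x₁ ^ j₁ * x₂ ^ j₂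

/-- `1/z!` with the convention that it vanishes for negative integers `z`. -/
noncomputable def invFacZ (z : ℤ) : ℝ := if 0 ≤ z then ((z.toNat.factorial : ℕ) : ℝ)⁻¹ else 0

/-- Pochhammer symbol extended to integer index via `(a)_k = Γ(a+k)/Γ(a)` for negative `k`. -/
noncomputable def pochZ (a : ℝ) (k : ℤ) : ℝ :=
  if 0 ≤ k then poch a k.toNat else Real.Gamma (a + (k : ℝ)) / Real.Gamma a

/-! ## auxiliary definitions -/

noncomputable def hc (n k : ℕ) : ℝ :=
  (-1 : ℝ) ^ k * (n.factorial : ℝ) / ((k.factorial : ℝ) * ((n - 2 * k).factorial : ℝ))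

noncomputable def lin (m n k : ℕ) : ℝ :=
  2 ^ k * (k.factorial : ℝ) * (m.choose k : ℝ) * (n.choose k : ℝ)

noncomputable def ffall (τ : ℝ) (m : ℕ) : ℝ := ∏ i ∈ Finset.range m, (τ - i)

noncomputable def coefA (m j : ℕ) : ℝ :=
  (-1 : ℝ) ^ j * ((2 * m).factorial : ℝ)
    / ((4 : ℝ) ^ j * ((2 * m - 2 * j).factorial : ℝ) * (j.factorial : ℝ))

/-! ## poch basics -/

lemma poch_zero (a : ℝ) : poch a 0 = 1 := by simp [poch]

lemma poch_succ (a : ℝ) (p : ℕ) : poch a (p + 1) = poch a p * (a + p) := by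
  simp [poch, Finset.prod_range_succ]

lemma poch_add (a : ℝ) (p q : ℕ) : poch a (p + q) = poch a p * poch (a + p) q := by
  simp only [poch, Finset.prod_range_add]
  congr 1
  exact Finset.prod_congr rfl fun i _ => by push_cast; ring

lemma ffall_succ (τ : ℝ) (p : ℕ) : ffall τ (p + 1) = ffall τ p * (τ - p) := by
  simp [ffall, Finset.prod_range_succ]

/-! ## abstract summation lemmas -/

lemma sum_step {M : ℕ} (a b P c : ℕ → ℝ) (τ : ℝ)
    (hb0 : b 0 = a 0)
    (hmid : ∀ j, j < M → b (j + 1) = a (j + 1) - c j * a j)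
    (hlast : b (M + 1) = -(c M * a M))
    (hP : ∀ j, j ≤ M → P (M - j) * (τ - (M : ℝ)) = P (M + 1 - j) - c j * P (M - j)) :
    ∑ j ∈ Finset.range (M + 1 + 1), b j * P (M + 1 - j)
      = (∑ j ∈ Finset.range (M + 1), a j * P (M - j)) * (τ - (M : ℝ)) := by
  have hterm : ∀ j ∈ Finset.range (M + 1),
      a j * P (M - j) * (τ - (M : ℝ))
        = a j * P (M + 1 - j) - c j * (a j * P (M - j)) := by
    intro j hj
    have hjM : j ≤ M := by have := Finset.mem_range.1 hj; omega
    calc a j * P (M - j) * (τ - (M : ℝ)) = a j * (P (M - j) * (τ - (M : ℝ))) := by ring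
      _ = a j * (P (M + 1 - j) - c j * P (M - j)) := by rw [hP j hjM]
      _ = a j * P (M + 1 - j) - c j * (a j * P (M - j)) := by ring
  rw [Finset.sum_mul, Finset.sum_congr rfl hterm, Finset.sum_sub_distrib]
  rw [Finset.sum_range_succ' (fun j => b j * P (M + 1 - j)) (M + 1)]
  rw [Finset.sum_range_succ (fun j => b (j + 1) * P (M + 1 - (j + 1))) M]
  rw [Finset.sum_range_succ' (fun j => a j * P (M + 1 - j)) M]
  rw [Finset.sum_range_succ (fun j => c j * (a j * P (M - j))) M]
  have hmid' : ∀ j ∈ Finset.range M,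
      b (j + 1) * P (M + 1 - (j + 1))
        = a (j + 1) * P (M + 1 - (j + 1)) - c j * (a j * P (M - j)) := by
    intro j hj
    have hjM : j < M := Finset.mem_range.1 hj
    rw [hmid j hjM, show M + 1 - (j + 1) = M - j by omega]
    ring
  rw [Finset.sum_congr rfl hmid', Finset.sum_sub_distrib, hlast, hb0,
    show M + 1 - (M + 1) = 0 by omega, show M - M = 0 by omega]
  ring

lemma herm_rec_sum_even {R : ℕ} (T A B : ℕ → ℝ)
    (h0 : T 0 = A 0)
    (hmid : ∀ k, k < R → T (k + 1) = A (k + 1) - B k)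
    (hlast : T (R + 1) = -B R) :
    ∑ k ∈ Finset.range (R + 1 + 1), T k
      = (∑ k ∈ Finset.range (R + 1), A k) - ∑ k ∈ Finset.range (R + 1), B k := by
  rw [Finset.sum_range_succ' T (R + 1), Finset.sum_range_succ (fun k => T (k + 1)) R,
    Finset.sum_congr rfl (fun k hk => hmid k (Finset.mem_range.1 hk)),
    Finset.sum_sub_distrib, Finset.sum_range_succ' A R, Finset.sum_range_succ B R, h0, hlast]
  ring

lemma herm_rec_sum_odd {R : ℕ} (T A B : ℕ → ℝ)
    (h0 : T 0 = A 0)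
    (hmid : ∀ k, k < R + 1 → T (k + 1) = A (k + 1) - B k) :
    ∑ k ∈ Finset.range (R + 1 + 1), T k
      = (∑ k ∈ Finset.range (R + 1 + 1), A k) - ∑ k ∈ Finset.range (R + 1), B k := by
  rw [Finset.sum_range_succ' T (R + 1), Finset.sum_range_succ' A (R + 1),
    Finset.sum_congr rfl (fun k hk => hmid k (Finset.mem_range.1 hk)),
    Finset.sum_sub_distrib, h0]
  ring

lemma herm_mul_sum {M : ℕ} (F G H E : ℕ → ℝ)
    (h0 : F 0 = G 0)
    (hkey : ∀ k, k < M + 2 → F (k + 1) = G (k + 1) + H k - E k)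
    (hGtop : G (M + 2) = 0)
    (hEtop : E (M + 1) = 0) :
    (∑ k ∈ Finset.range (M + 2), (G k + H k)) - ∑ k ∈ Finset.range (M + 1), E k
      = ∑ k ∈ Finset.range (M + 2 + 1), F k := by
  rw [Finset.sum_add_distrib, Finset.sum_range_succ' F (M + 2),
    Finset.sum_congr rfl (fun k hk => hkey k (Finset.mem_range.1 hk)),
    Finset.sum_sub_distrib, Finset.sum_add_distrib,
    Finset.sum_range_succ (fun k => G (k + 1)) (M + 1),
    Finset.sum_range_succ E (M + 1),
    Finset.sum_range_succ' G (M + 1), hGtop, hEtop, h0]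
  ring

/-! ## Herm basics -/

lemma herm_apply (r : ℕ) (x : ℝ) :
    Herm r x = ∑ k ∈ Finset.range (r / 2 + 1), hc r k * (2 * x) ^ (r - 2 * k) := rfl

lemma hc_zero (N : ℕ) : hc N 0 = 1 := by
  simp [hc, Nat.factorial_ne_zero]

lemma herm_zero (x : ℝ) : Herm 0 x = 1 := by simp [Herm]

lemma herm_one (x : ℝ) : Herm 1 x = 2 * x := by simp [Herm]

lemma hc_rec {n k : ℕ} (h : 2 * (k + 1) ≤ n + 1) :
    hc (n + 2) (k + 1) = hc (n + 1) (k + 1) - 2 * ((n : ℝ) + 1) * hc n k := by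
  obtain ⟨d, rfl⟩ : ∃ d, n = 2 * k + 1 + d := ⟨n - (2 * k + 1), by omega⟩
  simp only [hc]
  rw [show 2 * k + 1 + d + 2 - 2 * (k + 1) = d + 1 by omega,
      show 2 * k + 1 + d + 1 - 2 * (k + 1) = d by omega,
      show 2 * k + 1 + d - 2 * k = d + 1 by omega]
  have e1 : ((2 * k + 1 + d + 2).factorial : ℝ)
      = (2 * (k : ℝ) + 1 + d + 2) * (2 * (k : ℝ) + 1 + d + 1) * ((2 * k + 1 + d).factorial : ℝ) := by
    rw [show 2 * k + 1 + d + 2 = (2 * k + 1 + d + 1) + 1 from rfl, Nat.factorial_succ,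
      show 2 * k + 1 + d + 1 = (2 * k + 1 + d) + 1 from rfl, Nat.factorial_succ]
    push_cast; ring
  have e2 : ((2 * k + 1 + d + 1).factorial : ℝ)
      = (2 * (k : ℝ) + 1 + d + 1) * ((2 * k + 1 + d).factorial : ℝ) := by
    rw [show 2 * k + 1 + d + 1 = (2 * k + 1 + d) + 1 from rfl, Nat.factorial_succ]
    push_cast; ring
  have e3 : ((d + 1).factorial : ℝ) = ((d : ℝ) + 1) * (d.factorial : ℝ) := by
    rw [Nat.factorial_succ]; push_cast; ring
  have e4 : ((k + 1).factorial : ℝ) = ((k : ℝ) + 1) * (k.factorial : ℝ) := by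
    rw [Nat.factorial_succ]; push_cast; ring
  rw [e1, e2, e3, e4]
  have h1 : ((2 * k + 1 + d).factorial : ℝ) ≠ 0 := by
    exact_mod_cast Nat.factorial_ne_zero _
  have h2 : (d.factorial : ℝ) ≠ 0 := by exact_mod_cast Nat.factorial_ne_zero _
  have h3 : (k.factorial : ℝ) ≠ 0 := by exact_mod_cast Nat.factorial_ne_zero _
  have h4 : ((k : ℝ) + 1) ≠ 0 := by positivity
  have h5 : ((d : ℝ) + 1) ≠ 0 := by positivity
  simp only [pow_succ]
  push_cast
  field_simp
  ring

lemma hc_top (r : ℕ) : hc (2 * r + 2) (r + 1) = -2 * (2 * (r : ℝ) + 1) * hc (2 * r) r := by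
  simp only [hc]
  rw [show 2 * r + 2 - 2 * (r + 1) = 0 by omega, show 2 * r - 2 * r = 0 by omega]
  have e1 : ((2 * r + 2).factorial : ℝ)
      = (2 * (r : ℝ) + 2) * (2 * (r : ℝ) + 1) * ((2 * r).factorial : ℝ) := by
    rw [show 2 * r + 2 = (2 * r + 1) + 1 from rfl, Nat.factorial_succ,
      show 2 * r + 1 = (2 * r) + 1 from rfl, Nat.factorial_succ]
    push_cast; ring
  have e4 : ((r + 1).factorial : ℝ) = ((r : ℝ) + 1) * (r.factorial : ℝ) := by
    rw [Nat.factorial_succ]; push_cast; ring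
  rw [e1, e4]
  have h1 : ((2 * r).factorial : ℝ) ≠ 0 := by exact_mod_cast Nat.factorial_ne_zero _
  have h3 : (r.factorial : ℝ) ≠ 0 := by exact_mod_cast Nat.factorial_ne_zero _
  have h4 : ((r : ℝ) + 1) ≠ 0 := by positivity
  simp only [pow_succ, Nat.factorial_zero]
  field_simp

lemma herm_rec (n : ℕ) (x : ℝ) :
    Herm (n + 2) x = 2 * x * Herm (n + 1) x - 2 * ((n : ℝ) + 1) * Herm n x := by
  rcases Nat.even_or_odd n with ⟨r, rfl⟩ | ⟨r, rfl⟩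
  · -- n = r + r
    rw [herm_apply, herm_apply, herm_apply,
      show (r + r + 2) / 2 + 1 = r + 1 + 1 by omega,
      show (r + r + 1) / 2 + 1 = r + 1 by omega,
      show (r + r) / 2 + 1 = r + 1 by omega, Finset.mul_sum, Finset.mul_sum]
    have h0 : hc (r + r + 2) 0 * (2 * x) ^ (r + r + 2 - 2 * 0)
        = 2 * x * (hc (r + r + 1) 0 * (2 * x) ^ (r + r + 1 - 2 * 0)) := by
      rw [show r + r + 2 - 2 * 0 = (r + r + 1 - 2 * 0) + 1 by omega]
      simp only [pow_succ]
      rw [hc_zero, hc_zero]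
      ring
    have hlast : hc (r + r + 2) (r + 1) * (2 * x) ^ (r + r + 2 - 2 * (r + 1))
        = -(2 * (((r + r : ℕ) : ℝ) + 1) * (hc (r + r) r * (2 * x) ^ (r + r - 2 * r))) := by
      rw [show r + r + 2 - 2 * (r + 1) = 0 by omega, show r + r - 2 * r = 0 by omega,
        pow_zero, show r + r + 2 = 2 * r + 2 by omega,
        show r + r = 2 * r by omega, hc_top]
      push_cast
      ring
    have hmid : ∀ k, k < r →
        hc (r + r + 2) (k + 1) * (2 * x) ^ (r + r + 2 - 2 * (k + 1))
          = 2 * x * (hc (r + r + 1) (k + 1) * (2 * x) ^ (r + r + 1 - 2 * (k + 1)))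
            - 2 * (((r + r : ℕ) : ℝ) + 1) * (hc (r + r) k * (2 * x) ^ (r + r - 2 * k)) := by
      intro k hk'
      rw [show r + r + 2 - 2 * (k + 1) = r + r - 2 * k by omega,
        show r + r - 2 * k = (r + r + 1 - 2 * (k + 1)) + 1 by omega]
      simp only [pow_succ]
      have hrec := hc_rec (n := r + r) (k := k) (by omega)
      rw [hrec]
      push_cast
      ring
    exact herm_rec_sum_even
      (fun k => hc (r + r + 2) k * (2 * x) ^ (r + r + 2 - 2 * k))
      (fun k => 2 * x * (hc (r + r + 1) k * (2 * x) ^ (r + r + 1 - 2 * k)))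
      (fun k => 2 * (((r + r : ℕ) : ℝ) + 1) * (hc (r + r) k * (2 * x) ^ (r + r - 2 * k)))
      h0 hmid hlast
  · -- n = 2r + 1
    rw [herm_apply, herm_apply, herm_apply,
      show (2 * r + 1 + 2) / 2 + 1 = r + 1 + 1 by omega,
      show (2 * r + 1 + 1) / 2 + 1 = r + 1 + 1 by omega,
      show (2 * r + 1) / 2 + 1 = r + 1 by omega, Finset.mul_sum, Finset.mul_sum]
    have h0 : hc (2 * r + 1 + 2) 0 * (2 * x) ^ (2 * r + 1 + 2 - 2 * 0)
        = 2 * x * (hc (2 * r + 1 + 1) 0 * (2 * x) ^ (2 * r + 1 + 1 - 2 * 0)) := by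
      rw [show 2 * r + 1 + 2 - 2 * 0 = (2 * r + 1 + 1 - 2 * 0) + 1 by omega]
      simp only [pow_succ]
      rw [hc_zero, hc_zero]
      ring
    have hmid : ∀ k, k < r + 1 →
        hc (2 * r + 1 + 2) (k + 1) * (2 * x) ^ (2 * r + 1 + 2 - 2 * (k + 1))
          = 2 * x * (hc (2 * r + 1 + 1) (k + 1) * (2 * x) ^ (2 * r + 1 + 1 - 2 * (k + 1)))
            - 2 * (((2 * r + 1 : ℕ) : ℝ) + 1) * (hc (2 * r + 1) k * (2 * x) ^ (2 * r + 1 - 2 * k)) := by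
      intro k hk'
      rw [show 2 * r + 1 + 2 - 2 * (k + 1) = 2 * r + 1 - 2 * k by omega,
        show 2 * r + 1 - 2 * k = (2 * r + 1 + 1 - 2 * (k + 1)) + 1 by omega]
      simp only [pow_succ]
      have hrec := hc_rec (n := 2 * r + 1) (k := k) (by omega)
      rw [hrec]
      push_cast
      ring
    exact herm_rec_sum_odd
      (fun k => hc (2 * r + 1 + 2) k * (2 * x) ^ (2 * r + 1 + 2 - 2 * k))
      (fun k => 2 * x * (hc (2 * r + 1 + 1) k * (2 * x) ^ (2 * r + 1 + 1 - 2 * k)))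
      (fun k => 2 * (((2 * r + 1 : ℕ) : ℝ) + 1) * (hc (2 * r + 1) k * (2 * x) ^ (2 * r + 1 - 2 * k)))
      h0 hmid

lemma herm_mul_X (r : ℕ) (x : ℝ) :
    2 * x * Herm r x = Herm (r + 1) x + 2 * (r : ℝ) * Herm (r - 1) x := by
  cases r with
  | zero => simp [herm_zero, herm_one]
  | succ m =>
    have h := herm_rec m x
    rw [show m + 1 - 1 = m from rfl, show m + 1 + 1 = m + 2 from rfl]
    push_cast
    linarith [h]

lemma herm_neg (n : ℕ) (x : ℝ) : Herm n (-x) = (-1 : ℝ) ^ n * Herm n x := by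
  rw [herm_apply, herm_apply, Finset.mul_sum]
  apply Finset.sum_congr rfl
  intro k hk
  have hk' : 2 * k ≤ n := by
    have := Finset.mem_range.1 hk
    omega
  have h2 : (2 * (-x) : ℝ) = -(2 * x) := by ring
  rw [h2, neg_pow]
  have h3 : ((-1 : ℝ)) ^ (n - 2 * k) = (-1 : ℝ) ^ n := by
    conv_rhs => rw [show n = (n - 2 * k) + 2 * k by omega]
    rw [pow_add, pow_mul]
    norm_num
  rw [h3]; ring

/-! ## linearization -/

lemma lin_rec {m n k : ℕ} (hn : k + 1 ≤ n) (hm : k ≤ m) :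
    lin (m + 2) n (k + 1) = lin (m + 1) n (k + 1)
      + 2 * ((((m + 1 - k) + (n - k) : ℕ)) : ℝ) * lin (m + 1) n k
      - 2 * ((m : ℝ) + 1) * lin m n k := by
  have hkn : k ≤ n := by omega
  have f1 : ((n.choose (k + 1) : ℝ)) * ((k : ℝ) + 1) = (n.choose k : ℝ) * ((n : ℝ) - k) := by
    have h := congrArg (Nat.cast (R := ℝ)) (Nat.choose_succ_right_eq n k)
    push_cast [Nat.cast_sub hkn] at h
    linarith [h]
  have f2 : ((m : ℝ) + 1) * (m.choose k : ℝ) = ((m : ℝ) + 1 - k) * ((m + 1).choose k : ℝ) := by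
    have h1 := congrArg (Nat.cast (R := ℝ)) (Nat.add_one_mul_choose_eq m k)
    have h2 := congrArg (Nat.cast (R := ℝ)) (Nat.choose_succ_right_eq (m + 1) k)
    push_cast [Nat.cast_sub (show k ≤ m + 1 by omega)] at h1 h2
    nlinarith [h1, h2]
  have hcc : ((m + 2).choose (k + 1) : ℝ)
      = ((m + 1).choose (k + 1) : ℝ) + ((m + 1).choose k : ℝ) := by
    have h := Nat.choose_succ_succ (m + 1) k
    push_cast [h]; ring
  have hcast : ((((m + 1 - k) + (n - k) : ℕ)) : ℝ) = ((m : ℝ) + 1 - k) + ((n : ℝ) - k) := by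
    push_cast [Nat.cast_sub (show k ≤ m + 1 by omega), Nat.cast_sub hkn]
    ring
  have e4 : ((k + 1).factorial : ℝ) = ((k : ℝ) + 1) * (k.factorial : ℝ) := by
    rw [Nat.factorial_succ]; push_cast; ring
  simp only [lin, hcc, hcast, e4]
  linear_combination (2 : ℝ) ^ (k + 1) * (k.factorial : ℝ) * ((m + 1).choose k : ℝ) * f1
    + 2 ^ (k + 1) * (k.factorial : ℝ) * (n.choose k : ℝ) * f2

lemma lin_zero_right (m n k : ℕ) (h : n < k) : lin m n k = 0 := by
  simp [lin, Nat.choose_eq_zero_of_lt h]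

lemma lin_zero_left (m n k : ℕ) (h : m < k) : lin m n k = 0 := by
  simp [lin, Nat.choose_eq_zero_of_lt h]

lemma herm_mul (m : ℕ) : ∀ (n : ℕ) (x : ℝ),
    Herm m x * Herm n x
      = ∑ k ∈ Finset.range (m + 1), lin m n k * Herm ((m - k) + (n - k)) x := by
  induction m using Nat.twoStepInduction with
  | zero =>
    intro n x
    rw [Finset.sum_range_one, herm_zero]
    have e1 : 0 - 0 + (n - 0) = n := by omega
    rw [e1]
    simp [lin]
  | one =>
    intro n x
    rw [herm_one, herm_mul_X n x, Finset.sum_range_succ, Finset.sum_range_one]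
    have e1 : 1 - 0 + (n - 0) = n + 1 := by omega
    have e2 : 1 - 1 + (n - 1) = n - 1 := by omega
    rw [e1, e2]
    simp only [lin, Nat.choose_zero_right, Nat.choose_one_right, Nat.choose_self,
      Nat.factorial_one, Nat.factorial_zero, pow_zero, pow_one]
    push_cast
    ring
  | more m ih1 ih2 =>
    intro n x
    have key : ∀ k, k < m + 2 →
        lin (m + 2) n (k + 1) * Herm ((m + 2 - (k + 1)) + (n - (k + 1))) x
          = lin (m + 1) n (k + 1) * Herm (((m + 1 - (k + 1)) + (n - (k + 1))) + 1) x
            + lin (m + 1) n k * (2 * ((((m + 1 - k) + (n - k) : ℕ)) : ℝ))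
                * Herm (((m + 1 - k) + (n - k)) - 1) x
            - 2 * ((m : ℝ) + 1) * (lin m n k * Herm ((m - k) + (n - k)) x) := by
      intro k hk2
      by_cases hn : k + 1 ≤ n
      · by_cases hm : k ≤ m
        · rw [show (m + 2 - (k + 1)) + (n - (k + 1)) = m + n - 2 * k by omega,
            show ((m + 1 - (k + 1)) + (n - (k + 1))) + 1 = m + n - 2 * k by omega,
            show ((m + 1 - k) + (n - k)) - 1 = m + n - 2 * k by omega,
            show (m - k) + (n - k) = m + n - 2 * k by omega,
            lin_rec hn hm]
          ring
        · have hk1 : k = m + 1 := by omega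
          subst hk1
          rw [lin_zero_left (m + 1) n (m + 1 + 1) (by omega),
            lin_zero_left m n (m + 1) (by omega)]
          rw [show (m + 2 - (m + 1 + 1)) + (n - (m + 1 + 1)) = n - m - 2 by omega,
            show ((m + 1 - (m + 1)) + (n - (m + 1))) - 1 = n - m - 2 by omega]
          have hcast : ((((m + 1 - (m + 1)) + (n - (m + 1)) : ℕ)) : ℝ) = (n : ℝ) - (m + 1) := by
            rw [show m + 1 - (m + 1) = 0 by omega]
            push_cast [Nat.cast_sub (show m + 1 ≤ n by omega)]
            ring
          rw [hcast]
          have c1 : lin (m + 2) n (m + 2) = lin (m + 1) n (m + 1) * ((n : ℝ) - (m + 1)) * 2 := by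
            simp only [lin, Nat.choose_self]
            have h := congrArg (Nat.cast (R := ℝ)) (Nat.choose_succ_right_eq n (m + 1))
            push_cast [Nat.cast_sub (show m + 1 ≤ n by omega)] at h
            have e4 : ((m + 2).factorial : ℝ) = ((m : ℝ) + 2) * ((m + 1).factorial : ℝ) := by
              rw [show m + 2 = (m + 1) + 1 from rfl, Nat.factorial_succ]; push_cast; ring
            rw [e4, show m + 1 + 1 = m + 2 from rfl] at *
            push_cast
            linear_combination (2 : ℝ) ^ (m + 2) * (((m + 1).factorial : ℝ)) * h
          rw [show m + 1 + 1 = m + 2 from rfl, c1]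
          ring
      · have hcn : n < k + 1 := by omega
        rw [lin_zero_right (m + 2) n (k + 1) hcn, lin_zero_right (m + 1) n (k + 1) hcn]
        by_cases hkn : k = n
        · subst hkn
          by_cases hnm : k ≤ m
          · rw [show ((m + 1 - k) + (k - k)) - 1 = (m - k) + (k - k) by omega]
            have hcast : ((((m + 1 - k) + (k - k) : ℕ)) : ℝ) = (m : ℝ) + 1 - k := by
              rw [show k - k = 0 by omega]
              push_cast [Nat.cast_sub (show k ≤ m + 1 by omega)]
              ring
            rw [hcast]
            have c2 : lin (m + 1) k k * (2 * ((m : ℝ) + 1 - k)) = 2 * ((m : ℝ) + 1) * lin m k k := by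
              simp only [lin, Nat.choose_self]
              have h1 := congrArg (Nat.cast (R := ℝ)) (Nat.add_one_mul_choose_eq m k)
              have h2 := congrArg (Nat.cast (R := ℝ)) (Nat.choose_succ_right_eq (m + 1) k)
              push_cast [Nat.cast_sub (show k ≤ m + 1 by omega), Nat.succ_eq_add_one] at h1 h2
              push_cast
              linear_combination (-(2 : ℝ) * 2 ^ k * (k.factorial : ℝ)) * h1
                + (-(2 : ℝ) * 2 ^ k * (k.factorial : ℝ)) * h2
            linear_combination (-(Herm ((m - k) + (k - k)) x)) * c2
          · have hk1 : k = m + 1 := by omega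
            subst hk1
            rw [lin_zero_left m (m + 1) (m + 1) (by omega)]
            have hz : ((((m + 1 - (m + 1)) + ((m + 1) - (m + 1)) : ℕ)) : ℝ) = 0 := by
              rw [show m + 1 - (m + 1) = 0 by omega]
              simp
            rw [hz]
            ring
        · have hlt : n < k := by omega
          rw [lin_zero_right (m + 1) n k hlt, lin_zero_right m n k hlt]
          ring
    have h0 : lin (m + 2) n 0 * Herm ((m + 2 - 0) + (n - 0)) x
        = lin (m + 1) n 0 * Herm (((m + 1 - 0) + (n - 0)) + 1) x := by
      have e1 : (m + 2 - 0) + (n - 0) = m + n + 2 := by omega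
      have e2 : ((m + 1 - 0) + (n - 0)) + 1 = m + n + 2 := by omega
      rw [e1, e2]
      simp [lin]
    have hGtop : lin (m + 1) n (m + 2) * Herm (((m + 1 - (m + 2)) + (n - (m + 2))) + 1) x = 0 := by
      rw [lin_zero_left (m + 1) n (m + 2) (by omega)]
      ring
    have hEtop : 2 * ((m : ℝ) + 1) * (lin m n (m + 1) * Herm ((m - (m + 1)) + (n - (m + 1))) x)
        = 0 := by
      rw [lin_zero_left m n (m + 1) (by omega)]
      ring
    calc Herm (m + 2) x * Herm n x
        = 2 * x * (Herm (m + 1) x * Herm n x) - 2 * ((m : ℝ) + 1) * (Herm m x * Herm n x) := by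
          rw [herm_rec m x]; ring
      _ = (∑ k ∈ Finset.range (m + 2),
            (lin (m + 1) n k * Herm (((m + 1 - k) + (n - k)) + 1) x
              + lin (m + 1) n k * (2 * ((((m + 1 - k) + (n - k) : ℕ)) : ℝ))
                  * Herm (((m + 1 - k) + (n - k)) - 1) x))
          - ∑ k ∈ Finset.range (m + 1),
              2 * ((m : ℝ) + 1) * (lin m n k * Herm ((m - k) + (n - k)) x) := by
          rw [ih2 n x, ih1 n x, Finset.mul_sum, Finset.mul_sum]
          congr 1
          apply Finset.sum_congr rfl
          intro k _
          have hmx := herm_mul_X ((m + 1 - k) + (n - k)) x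
          calc 2 * x * (lin (m + 1) n k * Herm ((m + 1 - k) + (n - k)) x)
              = lin (m + 1) n k * (2 * x * Herm ((m + 1 - k) + (n - k)) x) := by ring
            _ = lin (m + 1) n k * (Herm (((m + 1 - k) + (n - k)) + 1) x
                  + 2 * ((((m + 1 - k) + (n - k) : ℕ)) : ℝ)
                      * Herm (((m + 1 - k) + (n - k)) - 1) x) := by rw [hmx]
            _ = _ := by ring
      _ = ∑ k ∈ Finset.range (m + 2 + 1),
            lin (m + 2) n k * Herm ((m + 2 - k) + (n - k)) x := by
          exact herm_mul_sum
            (fun k => lin (m + 2) n k * Herm ((m + 2 - k) + (n - k)) x)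
            (fun k => lin (m + 1) n k * Herm (((m + 1 - k) + (n - k)) + 1) x)
            (fun k => lin (m + 1) n k * (2 * ((((m + 1 - k) + (n - k) : ℕ)) : ℝ))
                * Herm (((m + 1 - k) + (n - k)) - 1) x)
            (fun k => 2 * ((m : ℝ) + 1) * (lin m n k * Herm ((m - k) + (n - k)) x))
            h0 key hGtop hEtop

/-! ## the key polynomial identity -/

lemma coefA_zero (m : ℕ) : coefA m 0 = 1 := by
  simp [coefA, Nat.factorial_ne_zero]

lemma coefA_boundary (m : ℕ) :
    coefA (m + 1) (m + 1) = -((2 * (m : ℝ) - (m : ℝ) + 1 / 2) * coefA m m) := by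
  simp only [coefA]
  rw [show 2 * (m + 1) - 2 * (m + 1) = 0 by omega, show 2 * m - 2 * m = 0 by omega]
  have e1 : ((2 * (m + 1)).factorial : ℝ)
      = (2 * (m : ℝ) + 2) * (2 * (m : ℝ) + 1) * ((2 * m).factorial : ℝ) := by
    rw [show 2 * (m + 1) = (2 * m + 1) + 1 by omega, Nat.factorial_succ,
      show 2 * m + 1 = (2 * m) + 1 from rfl, Nat.factorial_succ]
    push_cast; ring
  have e4 : ((m + 1).factorial : ℝ) = ((m : ℝ) + 1) * (m.factorial : ℝ) := by
    rw [Nat.factorial_succ]; push_cast; ring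
  rw [e1, e4]
  have h1 : ((2 * m).factorial : ℝ) ≠ 0 := by exact_mod_cast Nat.factorial_ne_zero _
  have h3 : (m.factorial : ℝ) ≠ 0 := by exact_mod_cast Nat.factorial_ne_zero _
  have h4 : ((m : ℝ) + 1) ≠ 0 := by positivity
  have h5 : (4 : ℝ) ^ m ≠ 0 := by positivity
  simp only [pow_succ, Nat.factorial_zero]
  field_simp
  ring

lemma coefA_mid {m j : ℕ} (hj : j < m) :
    coefA (m + 1) (j + 1) = coefA m (j + 1) - (2 * (m : ℝ) - (j : ℝ) + 1 / 2) * coefA m j := by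
  obtain ⟨d, rfl⟩ : ∃ d, m = j + 1 + d := ⟨m - (j + 1), by omega⟩
  simp only [coefA]
  rw [show 2 * (j + 1 + d + 1) - 2 * (j + 1) = 2 * d + 2 by omega,
    show 2 * (j + 1 + d) - 2 * (j + 1) = 2 * d by omega,
    show 2 * (j + 1 + d) - 2 * j = 2 * d + 2 by omega]
  have e1 : ((2 * (j + 1 + d + 1)).factorial : ℝ)
      = (2 * ((j : ℝ) + 1 + d) + 2) * (2 * ((j : ℝ) + 1 + d) + 1)
        * ((2 * (j + 1 + d)).factorial : ℝ) := by
    rw [show 2 * (j + 1 + d + 1) = (2 * (j + 1 + d) + 1) + 1 by omega, Nat.factorial_succ,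
      show 2 * (j + 1 + d) + 1 = (2 * (j + 1 + d)) + 1 from rfl, Nat.factorial_succ]
    push_cast; ring
  have e2 : ((2 * d + 2).factorial : ℝ)
      = (2 * (d : ℝ) + 2) * (2 * (d : ℝ) + 1) * ((2 * d).factorial : ℝ) := by
    rw [show 2 * d + 2 = (2 * d + 1) + 1 from rfl, Nat.factorial_succ,
      show 2 * d + 1 = (2 * d) + 1 from rfl, Nat.factorial_succ]
    push_cast; ring
  have e4 : ((j + 1).factorial : ℝ) = ((j : ℝ) + 1) * (j.factorial : ℝ) := by
    rw [Nat.factorial_succ]; push_cast; ring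
  rw [e1, e2, e4]
  have h1 : ((2 * (j + 1 + d)).factorial : ℝ) ≠ 0 := by exact_mod_cast Nat.factorial_ne_zero _
  have h2 : ((2 * d).factorial : ℝ) ≠ 0 := by exact_mod_cast Nat.factorial_ne_zero _
  have h3 : (j.factorial : ℝ) ≠ 0 := by exact_mod_cast Nat.factorial_ne_zero _
  have h4 : ((j : ℝ) + 1) ≠ 0 := by positivity
  have h5 : (4 : ℝ) ^ j ≠ 0 := by positivity
  have h6 : (2 * (d : ℝ) + 2) ≠ 0 := by positivity
  have h7 : (2 * (d : ℝ) + 1) ≠ 0 := by positivity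
  simp only [pow_succ]
  push_cast
  field_simp
  ring

lemma Jsum (m : ℕ) (τ : ℝ) :
    ∑ j ∈ Finset.range (m + 1), coefA m j * poch (τ + 1 / 2) (m - j) = ffall τ m := by
  induction m with
  | zero => norm_num [coefA, ffall, poch]
  | succ m ih =>
    rw [ffall_succ, ← ih]
    have hP : ∀ j, j ≤ m →
        poch (τ + 1 / 2) (m - j) * (τ - (m : ℝ))
          = poch (τ + 1 / 2) (m + 1 - j) - (2 * (m : ℝ) - (j : ℝ) + 1 / 2) * poch (τ + 1 / 2) (m - j) := by
      intro j hj
      rw [show m + 1 - j = (m - j) + 1 by omega, poch_succ]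
      have hc1 : ((m - j : ℕ) : ℝ) = (m : ℝ) - j := by
        push_cast [Nat.cast_sub hj]; ring
      rw [hc1]
      ring
    exact sum_step (fun j => coefA m j) (fun j => coefA (m + 1) j)
      (fun r => poch (τ + 1 / 2) r) (fun j => 2 * (m : ℝ) - (j : ℝ) + 1 / 2) τ
      (by show coefA (m + 1) 0 = coefA m 0; rw [coefA_zero, coefA_zero])
      (fun j hj => coefA_mid hj)
      (by show coefA (m + 1) (m + 1)
            = -((2 * (m : ℝ) - (m : ℝ) + 1 / 2) * coefA m m)
          exact coefA_boundary m)
      hP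

/-! ## Gamma and moments -/

lemma Gamma_poch (τ : ℝ) (hτ : 0 < τ) (r : ℕ) :
    Real.Gamma (τ + r) = Real.Gamma τ * poch τ r := by
  induction r with
  | zero => simp [poch_zero]
  | succ p ih =>
    have h1 : τ + (p : ℝ) ≠ 0 := by positivity
    have h2 : τ + ((p + 1 : ℕ) : ℝ) = (τ + p) + 1 := by push_cast; ring
    rw [h2, Real.Gamma_add_one h1, ih, poch_succ]
    ring

lemma integrable_pow_exp (j : ℕ) : Integrable (fun x : ℝ => x ^ j * Real.exp (-x ^ 2)) := by
  have h := integrable_rpow_mul_exp_neg_mul_sq (b := 1) one_pos (s := (j : ℝ))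
    (by have : (0 : ℝ) ≤ (j : ℝ) := Nat.cast_nonneg j; linarith)
  simp only [neg_mul, one_mul, Real.rpow_natCast] at h
  exact h

lemma gauss_moment (p : ℕ) :
    ∫ x : ℝ, x ^ (2 * p) * Real.exp (-x ^ 2) = Real.Gamma ((p : ℝ) + 1 / 2) := by
  have h1 : (fun x : ℝ => x ^ (2 * p) * Real.exp (-x ^ 2))
      = (fun x : ℝ => |x| ^ (2 * p) * Real.exp (-|x| ^ 2)) := by
    funext x
    have h0 : (0 : ℝ) ≤ x ^ (2 * p) := by rw [pow_mul]; positivity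
    rw [pow_abs, abs_of_nonneg h0, sq_abs]
  rw [h1, integral_comp_abs (f := fun y : ℝ => y ^ (2 * p) * Real.exp (-y ^ 2))]
  have h2 : ∫ x in Set.Ioi (0 : ℝ), x ^ (2 * p) * Real.exp (-x ^ 2)
      = ∫ x in Set.Ioi (0 : ℝ), x ^ (((2 * p : ℕ) : ℝ)) * Real.exp (-x ^ (2 : ℝ)) := by
    apply setIntegral_congr_fun measurableSet_Ioi
    intro x _
    dsimp only
    rw [Real.rpow_natCast, Real.rpow_two]
  rw [h2, integral_rpow_mul_exp_neg_rpow (by norm_num)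
    (by have : (0 : ℝ) ≤ ((2 * p : ℕ) : ℝ) := Nat.cast_nonneg _; linarith)]
  rw [show ((((2 * p : ℕ) : ℝ)) + 1) / 2 = (p : ℝ) + 1 / 2 by push_cast; ring]
  ring

lemma herm_expand (p r : ℕ) (x : ℝ) :
    x ^ p * Real.exp (-x ^ 2) * Herm r x
      = ∑ j ∈ Finset.range (r / 2 + 1),
          hc r j * 2 ^ (r - 2 * j) * (x ^ (p + (r - 2 * j)) * Real.exp (-x ^ 2)) := by
  rw [herm_apply, Finset.mul_sum]
  apply Finset.sum_congr rfl
  intro j _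
  rw [mul_pow, pow_add]
  ring

lemma integrable_pow_exp_herm (p r : ℕ) :
    Integrable (fun x : ℝ => x ^ p * Real.exp (-x ^ 2) * Herm r x) := by
  have h1 : (fun x : ℝ => x ^ p * Real.exp (-x ^ 2) * Herm r x)
      = fun x => ∑ j ∈ Finset.range (r / 2 + 1),
          hc r j * 2 ^ (r - 2 * j) * (x ^ (p + (r - 2 * j)) * Real.exp (-x ^ 2)) :=
    funext (herm_expand p r)
  rw [h1]
  exact integrable_finset_sum _ fun j _ => (integrable_pow_exp _).const_mul _

lemma moment_herm (p r : ℕ) :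
    ∫ x : ℝ, x ^ p * Real.exp (-x ^ 2) * Herm r x
      = ∑ j ∈ Finset.range (r / 2 + 1),
          hc r j * 2 ^ (r - 2 * j) * ∫ x : ℝ, x ^ (p + (r - 2 * j)) * Real.exp (-x ^ 2) := by
  have h1 : (fun x : ℝ => x ^ p * Real.exp (-x ^ 2) * Herm r x)
      = fun x => ∑ j ∈ Finset.range (r / 2 + 1),
          hc r j * 2 ^ (r - 2 * j) * (x ^ (p + (r - 2 * j)) * Real.exp (-x ^ 2)) :=
    funext (herm_expand p r)
  rw [h1, integral_finset_sum _ fun j _ => (integrable_pow_exp _).const_mul _]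
  exact Finset.sum_congr rfl fun j _ => integral_const_mul _ _

lemma herm_moment2 (t m : ℕ) :
    ∫ x : ℝ, x ^ (2 * t) * Real.exp (-x ^ 2) * Herm (2 * m) x
      = Real.Gamma ((t : ℝ) + 1 / 2) * (2 ^ (2 * m) * ffall (t : ℝ) m) := by
  rw [moment_herm, show (2 * m) / 2 + 1 = m + 1 by omega, ← Jsum m (t : ℝ),
    Finset.mul_sum, Finset.mul_sum]
  apply Finset.sum_congr rfl
  intro j hj
  have hjm : j ≤ m := by have := Finset.mem_range.1 hj; omega
  rw [show 2 * t + (2 * m - 2 * j) = 2 * (t + (m - j)) by omega, gauss_moment]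
  have hg : Real.Gamma (((t + (m - j) : ℕ) : ℝ) + 1 / 2)
      = Real.Gamma ((t : ℝ) + 1 / 2) * poch ((t : ℝ) + 1 / 2) (m - j) := by
    rw [show (((t + (m - j) : ℕ) : ℝ) + 1 / 2) = ((t : ℝ) + 1 / 2) + ((m - j : ℕ) : ℝ) by
      push_cast; ring]
    exact Gamma_poch _ (by positivity) _
  rw [hg]
  have hpow : (2 : ℝ) ^ (2 * m) = 2 ^ (2 * m - 2 * j) * 4 ^ j := by
    rw [show (4 : ℝ) = 2 ^ 2 by norm_num, ← pow_mul, ← pow_add]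
    congr 1
    omega
  simp only [hc, coefA]
  have hf2 : ((2 * m - 2 * j).factorial : ℝ) ≠ 0 := by exact_mod_cast Nat.factorial_ne_zero _
  have hf3 : (j.factorial : ℝ) ≠ 0 := by exact_mod_cast Nat.factorial_ne_zero _
  have hf5 : (4 : ℝ) ^ j ≠ 0 := by positivity
  rw [hpow]
  field_simp

/-! ## evaluation of the terminating 2F1 at 1 -/

lemma poch_half_ne (m t : ℕ) (j : ℕ) : poch (1 / 2 - (m : ℝ) - (t : ℝ)) j ≠ 0 := by
  simp only [poch]
  rw [Finset.prod_ne_zero_iff]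
  intro i _ h
  have hcast : ((2 * (m + t) : ℕ) : ℝ) = ((2 * i + 1 : ℕ) : ℝ) := by push_cast; linarith
  have h2 := Nat.cast_injective (R := ℝ) hcast
  omega

lemma poch_neg_half (m : ℕ) : ∀ j, j ≤ m →
    poch (-(m : ℝ)) j * poch (1 / 2 - (m : ℝ)) j
      = ((2 * m).factorial : ℝ) / (4 ^ j * ((2 * m - 2 * j).factorial : ℝ)) := by
  intro j
  induction j with
  | zero =>
    intro _
    simp [poch_zero, Nat.factorial_ne_zero]
  | succ i ih =>
    intro h
    have hi := ih (by omega)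
    obtain ⟨d, hd⟩ : ∃ d, m = i + 1 + d := ⟨m - (i + 1), by omega⟩
    subst hd
    rw [show 2 * (i + 1 + d) - 2 * i = 2 * d + 2 by omega] at hi
    rw [show 2 * (i + 1 + d) - 2 * (i + 1) = 2 * d by omega, poch_succ, poch_succ]
    have e2 : ((2 * d + 2).factorial : ℝ)
        = (2 * (d : ℝ) + 2) * (2 * (d : ℝ) + 1) * ((2 * d).factorial : ℝ) := by
      rw [show 2 * d + 2 = (2 * d + 1) + 1 from rfl, Nat.factorial_succ,
        show 2 * d + 1 = (2 * d) + 1 from rfl, Nat.factorial_succ]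
      push_cast; ring
    rw [e2] at hi
    have h2 : ((2 * d).factorial : ℝ) ≠ 0 := by exact_mod_cast Nat.factorial_ne_zero _
    have h5 : (4 : ℝ) ^ i ≠ 0 := by positivity
    have h6 : (2 * (d : ℝ) + 2) ≠ 0 := by positivity
    have h7 : (2 * (d : ℝ) + 1) ≠ 0 := by positivity
    calc poch (-((i + 1 + d : ℕ) : ℝ)) i * (-((i + 1 + d : ℕ) : ℝ) + i)
          * (poch (1 / 2 - ((i + 1 + d : ℕ) : ℝ)) i * (1 / 2 - ((i + 1 + d : ℕ) : ℝ) + i))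
        = (poch (-((i + 1 + d : ℕ) : ℝ)) i * poch (1 / 2 - ((i + 1 + d : ℕ) : ℝ)) i)
          * ((-((i + 1 + d : ℕ) : ℝ) + i) * (1 / 2 - ((i + 1 + d : ℕ) : ℝ) + i)) := by ring
      _ = _ := by
          rw [hi]
          simp only [pow_succ]
          push_cast
          field_simp
          ring

lemma poch_reflect (τ : ℝ) (m j : ℕ) (hj : j ≤ m) :
    poch τ m = poch τ (m - j) * ((-1 : ℝ) ^ j * poch (1 - τ - (m : ℝ)) j) := by
  have key : poch (τ + ((m - j : ℕ) : ℝ)) j = (-1 : ℝ) ^ j * poch (1 - τ - (m : ℝ)) j := by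
    rw [show ((-1 : ℝ) ^ j) = ∏ _i ∈ Finset.range j, (-1 : ℝ) by
      rw [Finset.prod_const]; simp]
    simp only [poch]
    rw [← Finset.prod_mul_distrib,
      ← Finset.prod_range_reflect (fun i => τ + ((m - j : ℕ) : ℝ) + (i : ℝ)) j]
    apply Finset.prod_congr rfl
    intro i hi
    have hij : i < j := Finset.mem_range.1 hi
    have c1 : ((j - 1 - i : ℕ) : ℝ) = (j : ℝ) - 1 - i := by
      push_cast [Nat.cast_sub (show i ≤ j - 1 by omega), Nat.cast_sub (show 1 ≤ j by omega)]
      ring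
    have c2 : ((m - j : ℕ) : ℝ) = (m : ℝ) - j := by push_cast [Nat.cast_sub hj]; ring
    rw [c1, c2]
    ring
  conv_lhs => rw [show m = (m - j) + j by omega]
  rw [poch_add, key]

lemma g2f1 (m t : ℕ) :
    Real.Gamma (((t : ℝ) + 1 / 2) + (m : ℝ))
        * hyp2F1 m (1 / 2 - (m : ℝ)) (1 / 2 - (m : ℝ) - (t : ℝ)) 1
      = Real.Gamma ((t : ℝ) + 1 / 2) * ffall (t : ℝ) m := by
  have hGam : Real.Gamma (((t : ℝ) + 1 / 2) + (m : ℝ))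
      = Real.Gamma ((t : ℝ) + 1 / 2) * poch ((t : ℝ) + 1 / 2) m :=
    Gamma_poch _ (by positivity) m
  rw [hGam, ← Jsum m (t : ℝ), hyp2F1, Finset.mul_sum, Finset.mul_sum]
  apply Finset.sum_congr rfl
  intro j hj
  have hjm : j ≤ m := by have := Finset.mem_range.1 hj; omega
  rw [one_pow, mul_one]
  have hrefl : poch ((t : ℝ) + 1 / 2) m
      = poch ((t : ℝ) + 1 / 2) (m - j)
        * ((-1 : ℝ) ^ j * poch (1 / 2 - (m : ℝ) - (t : ℝ)) j) := by
    have h := poch_reflect ((t : ℝ) + 1 / 2) m j hjm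
    rw [show (1 : ℝ) - ((t : ℝ) + 1 / 2) - (m : ℝ) = 1 / 2 - (m : ℝ) - (t : ℝ) by ring] at h
    exact h
  rw [hrefl, poch_neg_half m j hjm]
  simp only [coefA]
  have hne := poch_half_ne m t j
  have h3 : (j.factorial : ℝ) ≠ 0 := by exact_mod_cast Nat.factorial_ne_zero _
  have hcancel : ((2 * m).factorial : ℝ) / (4 ^ j * ((2 * m - 2 * j).factorial : ℝ))
        / (poch (1 / 2 - (m : ℝ) - (t : ℝ)) j * (j.factorial : ℝ))
        * poch (1 / 2 - (m : ℝ) - (t : ℝ)) j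
      = ((2 * m).factorial : ℝ)
        / (4 ^ j * ((2 * m - 2 * j).factorial : ℝ) * (j.factorial : ℝ)) := by
    rw [div_div, div_mul_eq_mul_div,
      show (4 : ℝ) ^ j * ((2 * m - 2 * j).factorial : ℝ)
            * (poch (1 / 2 - (m : ℝ) - (t : ℝ)) j * (j.factorial : ℝ))
          = (4 ^ j * ((2 * m - 2 * j).factorial : ℝ) * (j.factorial : ℝ))
            * poch (1 / 2 - (m : ℝ) - (t : ℝ)) j by ring,
      mul_div_mul_right _ _ hne]
  calc Real.Gamma ((t : ℝ) + 1 / 2)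
        * (poch ((t : ℝ) + 1 / 2) (m - j) * ((-1 : ℝ) ^ j * poch (1 / 2 - (m : ℝ) - (t : ℝ)) j))
        * (((2 * m).factorial : ℝ) / (4 ^ j * ((2 * m - 2 * j).factorial : ℝ))
            / (poch (1 / 2 - (m : ℝ) - (t : ℝ)) j * (j.factorial : ℝ)))
      = Real.Gamma ((t : ℝ) + 1 / 2) * poch ((t : ℝ) + 1 / 2) (m - j) * (-1 : ℝ) ^ j
          * (((2 * m).factorial : ℝ) / (4 ^ j * ((2 * m - 2 * j).factorial : ℝ))
              / (poch (1 / 2 - (m : ℝ) - (t : ℝ)) j * (j.factorial : ℝ))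
              * poch (1 / 2 - (m : ℝ) - (t : ℝ)) j) := by ring
    _ = Real.Gamma ((t : ℝ) + 1 / 2) * poch ((t : ℝ) + 1 / 2) (m - j) * (-1 : ℝ) ^ j
          * (((2 * m).factorial : ℝ)
              / (4 ^ j * ((2 * m - 2 * j).factorial : ℝ) * (j.factorial : ℝ))) := by
        rw [hcancel]
    _ = _ := by ring

/-- power moment of the Hermite Rakhmanov density. -/
theorem hermite_power_moment (n s : ℕ) :
    (Even s →
      ∫ x : ℝ, x ^ s * Real.exp (-x ^ 2) * (Herm n x) ^ 2 =
        (2 : ℝ) ^ (2 * n) *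
          ∑ k ∈ Finset.range (n + 1),
            (n.choose k : ℝ) ^ 2 * (k.factorial : ℝ) * (2 : ℝ)⁻¹ ^ k *
              Real.Gamma (1 / 2 - (k : ℝ) + (n : ℝ) + (s : ℝ) / 2) *
              hyp2F1 (n - k) (1 / 2 + (k : ℝ) - (n : ℝ))
                (1 / 2 + (k : ℝ) - (n : ℝ) - (s : ℝ) / 2) 1) ∧
    (Odd s → ∫ x : ℝ, x ^ s * Real.exp (-x ^ 2) * (Herm n x) ^ 2 = 0) := by
  constructor
  · rintro ⟨t, rfl⟩
    have hpt : ∀ x : ℝ, x ^ (t + t) * Real.exp (-x ^ 2) * (Herm n x) ^ 2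
        = ∑ k ∈ Finset.range (n + 1),
            lin n n k * (x ^ (2 * t) * Real.exp (-x ^ 2) * Herm (2 * (n - k)) x) := by
      intro x
      rw [show t + t = 2 * t by ring, pow_two (Herm n x), herm_mul n n x, Finset.mul_sum]
      apply Finset.sum_congr rfl
      intro k _
      rw [show (n - k) + (n - k) = 2 * (n - k) by ring]
      ring
    rw [show (fun x : ℝ => x ^ (t + t) * Real.exp (-x ^ 2) * (Herm n x) ^ 2)
        = fun x => ∑ k ∈ Finset.range (n + 1),
            lin n n k * (x ^ (2 * t) * Real.exp (-x ^ 2) * Herm (2 * (n - k)) x)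
      from funext hpt]
    rw [integral_finset_sum _ fun k _ => (integrable_pow_exp_herm _ _).const_mul _,
      Finset.mul_sum]
    apply Finset.sum_congr rfl
    intro k hk
    have hkn : k ≤ n := by have := Finset.mem_range.1 hk; omega
    rw [integral_const_mul, herm_moment2 t (n - k)]
    have hΓ : (1 / 2 - (k : ℝ) + (n : ℝ) + ((t + t : ℕ) : ℝ) / 2)
        = ((t : ℝ) + 1 / 2) + ((n - k : ℕ) : ℝ) := by
      push_cast [Nat.cast_sub hkn]; ring
    have hb : (1 / 2 + (k : ℝ) - (n : ℝ)) = 1 / 2 - ((n - k : ℕ) : ℝ) := by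
      push_cast [Nat.cast_sub hkn]; ring
    have hcarg : (1 / 2 + (k : ℝ) - (n : ℝ) - ((t + t : ℕ) : ℝ) / 2)
        = 1 / 2 - ((n - k : ℕ) : ℝ) - (t : ℝ) := by
      push_cast [Nat.cast_sub hkn]; ring
    rw [hΓ, hcarg, hb]
    have heq : (2 : ℝ) ^ (2 * n) * ((2 : ℝ)⁻¹) ^ k = 2 ^ k * 2 ^ (2 * (n - k)) := by
      have h2p : (2 : ℝ) ^ (2 * n) = 2 ^ k * 2 ^ (2 * (n - k)) * 2 ^ k := by
        rw [← pow_add, ← pow_add]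
        congr 1
        omega
      have h2k : ((2 : ℝ) ^ k) ≠ 0 := by positivity
      rw [h2p, inv_pow]
      field_simp
    simp only [lin]
    linear_combination
      (-(2 : ℝ) ^ (2 * n) * ((n.choose k : ℝ)) ^ 2 * (k.factorial : ℝ) * ((2 : ℝ)⁻¹) ^ k)
          * (g2f1 (n - k) t)
        + (-((n.choose k : ℝ)) ^ 2 * (k.factorial : ℝ) * Real.Gamma ((t : ℝ) + 1 / 2)
            * ffall (t : ℝ) (n - k)) * heq
  · intro hs
    have hneg : ∀ x : ℝ, (-x) ^ s * Real.exp (-(-x) ^ 2) * (Herm n (-x)) ^ 2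
        = -(x ^ s * Real.exp (-x ^ 2) * (Herm n x) ^ 2) := by
      intro x
      rw [hs.neg_pow, show ((-x) ^ 2 : ℝ) = x ^ 2 by ring, herm_neg, mul_pow,
        ← pow_mul, show n * 2 = 2 * n by ring, pow_mul, neg_one_sq, one_pow]
      ring
    have h1 : ∫ x : ℝ, (-x) ^ s * Real.exp (-(-x) ^ 2) * (Herm n (-x)) ^ 2
        = ∫ x : ℝ, x ^ s * Real.exp (-x ^ 2) * (Herm n x) ^ 2 :=
      (Measure.measurePreserving_neg (volume : Measure ℝ)).integral_comp
        (Homeomorph.neg ℝ).measurableEmbedding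
        (fun y => y ^ s * Real.exp (-y ^ 2) * (Herm n y) ^ 2)
    have h2 : ∫ x : ℝ, (-x) ^ s * Real.exp (-(-x) ^ 2) * (Herm n (-x)) ^ 2
        = ∫ x : ℝ, -(x ^ s * Real.exp (-x ^ 2) * (Herm n x) ^ 2) := by
      congr 1
      exact funext hneg
    rw [h2, integral_neg] at h1
    linarith [h1]
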